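/- The I-sparse set topology is not first countable: for every b ∈ ℝ and every sequence (U_n)_{n∈ℕ} of members of 𝒰 each containing b, there exists V ∈ 𝒰 with b ∈ V such that U_n ⊄ V for every n; hence no point of ℝ admits a countable neighborhood basis in (ℝ, 𝒰). -/

import Mathlib

open MeasureTheory Filter Set
open scoped ENNReal

noncomputable section

/-- A nontrivial admissible ideal of subsets of ℕ: closed under subsets and
finite unions, contains every finite set, and does not contain ℕ itself. -/
structure AdmissibleIdeal : Type where
  carrier : Set (Set ℕ)
  subset_mem : ∀ ⦃A B : Set ℕ⦄, A ∈ carrier → B ⊆ A → B ∈ carrier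
  union_mem : ∀ ⦃A B : Set ℕ⦄, A ∈ carrier → B ∈ carrier → A ∪ B ∈ carrier
  finite_mem : ∀ A : Set ℕ, A.Finite → A ∈ carrier
  univ_not_mem : (Set.univ : Set ℕ) ∉ carrier

/-- The filter F(I) = {M ⊆ ℕ : ℕ \ M ∈ I} associated with the ideal I. -/
def AdmissibleIdeal.filter (I : AdmissibleIdeal) : Filter ℕ :=
  Filter.comk (· ∈ I.carrier) (I.finite_mem ∅ Set.finite_empty)
    (fun _t ht _s hs => I.subset_mem ht hs)
    (fun _s hs _t ht => I.union_mem hs ht)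

/-- A sequence of closed intervals admissible about the point `p`:
each `J n` is a closed interval containing `p`, and
`{n : 0 < λ(J n) < 1/n} ∈ F(I)`. -/
def AdmissibleSeq (I : AdmissibleIdeal) (p : ℝ) (J : ℕ → Set ℝ) : Prop :=
  (∀ n, ∃ a b : ℝ, a ≤ b ∧ J n = Set.Icc a b) ∧ (∀ n, p ∈ J n) ∧
    {n : ℕ | 0 < volume (J n) ∧ volume (J n) < (n : ℝ≥0∞)⁻¹} ∈ I.filter

/-- The sequence n ↦ λ(E ∩ J n)/λ(J n) (interpreted as 0 when λ(J n) = 0). -/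
def ratioSeq (E : Set ℝ) (J : ℕ → Set ℝ) : ℕ → ℝ :=
  fun n => (volume (E ∩ J n) / volume (J n)).toReal

/-- Upper I-density of `E` at `p`: sup over admissible sequences of the
limsup along `F(I)` of the measure ratios. -/
def upperIDensity (I : AdmissibleIdeal) (p : ℝ) (E : Set ℝ) : ℝ :=
  sSup {l : ℝ | ∃ J : ℕ → Set ℝ, AdmissibleSeq I p J ∧
    l = Filter.limsup (ratioSeq E J) I.filter}

/-- Lower I-density of `E` at `p`: inf over admissible sequences of the
liminf along `F(I)` of the measure ratios. -/
def lowerIDensity (I : AdmissibleIdeal) (p : ℝ) (E : Set ℝ) : ℝ :=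
  sInf {l : ℝ | ∃ J : ℕ → Set ℝ, AdmissibleSeq I p J ∧
    l = Filter.liminf (ratioSeq E J) I.filter}

/-- `C` is a measurable cover of `A`. -/
def IsMeasurableCover (C A : Set ℝ) : Prop :=
  MeasurableSet C ∧ A ⊆ C ∧
    ∀ F : Set ℝ, MeasurableSet F → F ⊆ C \ A → volume F = 0

/-- `A` is I-sparse at `x`, i.e. `A ∈ S_I(x)`. -/
def ISparseAt (I : AdmissibleIdeal) (A : Set ℝ) (x : ℝ) : Prop :=
  ∀ B : Set ℝ, MeasurableSet B → upperIDensity I x B < 1 →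
    ∀ C : Set ℝ, IsMeasurableCover C A → upperIDensity I x (C ∪ B) < 1

/-- The I-density topology T_I. -/
def IDensityTopology (I : AdmissibleIdeal) : Set (Set ℝ) :=
  {E | MeasurableSet E ∧ ∀ x ∈ E, lowerIDensity I x E = 1}

/-- The I-sparse set topology 𝒰. -/
def sparseTop (I : AdmissibleIdeal) : Set (Set ℝ) :=
  {E | ∀ x ∈ E, ISparseAt I Eᶜ x}

-- auxiliary lemmas

instance AdmissibleIdeal.filter_neBot (I : AdmissibleIdeal) : I.filter.NeBot := by
  rw [Filter.neBot_iff]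
  intro h
  have : (∅ : Set ℕ) ∈ I.filter := h ▸ Filter.mem_bot
  rw [AdmissibleIdeal.filter, Filter.mem_comk, Set.compl_empty] at this
  exact I.univ_not_mem this

lemma mem_Ifilter {I : AdmissibleIdeal} {s : Set ℕ} (h : sᶜ ∈ I.carrier) : s ∈ I.filter :=
  Filter.mem_comk.2 h

lemma exists_admissible (I : AdmissibleIdeal) (p : ℝ) :
    AdmissibleSeq I p (fun n => Set.Icc p (p + ((n : ℝ) + 1)⁻¹ / 2)) := by
  have hpos : ∀ n : ℕ, (0:ℝ) < ((n : ℝ) + 1)⁻¹ / 2 := by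
    intro n; positivity
  refine ⟨fun n => ⟨p, p + ((n : ℝ) + 1)⁻¹ / 2, by linarith [hpos n], rfl⟩,
    fun n => ⟨le_refl p, by linarith [hpos n]⟩, ?_⟩
  have hvol : ∀ n : ℕ, volume (Set.Icc p (p + ((n : ℝ) + 1)⁻¹ / 2))
      = ENNReal.ofReal (((n : ℝ) + 1)⁻¹ / 2) := by
    intro n; rw [Real.volume_Icc]; ring_nf
  apply Filter.mem_of_superset (mem_Ifilter (s := {n : ℕ | 1 ≤ n})
    (I.subset_mem (I.finite_mem {0} (Set.finite_singleton 0)) ?_))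
  · intro n hn
    simp only [Set.mem_setOf_eq] at hn ⊢
    have h1 : (1:ℝ) ≤ (n:ℝ) := by exact_mod_cast hn
    constructor
    · rw [hvol n]; exact ENNReal.ofReal_pos.2 (hpos n)
    · rw [hvol n]
      have hn0 : (0:ℝ) < (n:ℝ) := by linarith
      rw [show ((n:ℕ) : ℝ≥0∞) = ENNReal.ofReal (n:ℝ) by simp,
        ← ENNReal.ofReal_inv_of_pos hn0]
      apply ENNReal.ofReal_lt_ofReal_iff_of_nonneg (le_of_lt (hpos n)) |>.2
      have h2 : ((n:ℝ) + 1)⁻¹ ≤ (n:ℝ)⁻¹ := by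
        apply inv_anti₀ hn0; linarith
      have h3 : ((n:ℝ) + 1)⁻¹ / 2 < ((n:ℝ) + 1)⁻¹ := by
        have := hpos n; linarith
      linarith
  · intro n hn
    simp only [Set.mem_compl_iff, Set.mem_setOf_eq, not_le, Nat.lt_one_iff] at hn
    simp [hn]

lemma ratio_le_one (E : Set ℝ) (J : ℕ → Set ℝ) (n : ℕ) : ratioSeq E J n ≤ 1 := by
  have h : volume (E ∩ J n) / volume (J n) ≤ 1 := by
    apply ENNReal.div_le_of_le_mul
    rw [one_mul]
    exact measure_mono Set.inter_subset_right
  calc (volume (E ∩ J n) / volume (J n)).toReal ≤ (1 : ℝ≥0∞).toReal :=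
        ENNReal.toReal_mono ENNReal.one_ne_top h
    _ = 1 := by simp

lemma limsup_ratio_le_one (I : AdmissibleIdeal) (E : Set ℝ) (J : ℕ → Set ℝ) :
    Filter.limsup (ratioSeq E J) I.filter ≤ 1 :=
  Filter.limsup_le_of_le (isCoboundedUnder_le_of_le I.filter (x := 0)
    (fun n => ENNReal.toReal_nonneg)) (Filter.Eventually.of_forall (ratio_le_one E J))

lemma bddAbove_density_set (I : AdmissibleIdeal) (p : ℝ) (E : Set ℝ) :
    BddAbove {l : ℝ | ∃ J : ℕ → Set ℝ, AdmissibleSeq I p J ∧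
      l = Filter.limsup (ratioSeq E J) I.filter} := by
  refine ⟨1, fun l hl => ?_⟩
  obtain ⟨J, _, rfl⟩ := hl
  exact limsup_ratio_le_one I E J

lemma upperIDensity_empty (I : AdmissibleIdeal) (p : ℝ) :
    upperIDensity I p ∅ = 0 := by
  have hset : {l : ℝ | ∃ J : ℕ → Set ℝ, AdmissibleSeq I p J ∧
      l = Filter.limsup (ratioSeq ∅ J) I.filter} = {0} := by
    ext l
    simp only [Set.mem_setOf_eq, Set.mem_singleton_iff]
    constructor
    · rintro ⟨J, _, rfl⟩
      have : ratioSeq ∅ J = fun _ => (0:ℝ) := by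
        funext n; simp [ratioSeq]
      rw [this, Filter.limsup_const]
    · rintro rfl
      exact ⟨_, exists_admissible I p, by
        have : ratioSeq ∅ (fun n => Set.Icc p (p + ((n : ℝ) + 1)⁻¹ / 2)) = fun _ => (0:ℝ) := by
          funext n; simp [ratioSeq]
        rw [this, Filter.limsup_const]⟩
  rw [upperIDensity, hset, csSup_singleton]

lemma upperIDensity_univ_ge (I : AdmissibleIdeal) (p : ℝ) :
    (1:ℝ) ≤ upperIDensity I p Set.univ := by
  apply le_csSup (bddAbove_density_set I p _)
  refine ⟨_, exists_admissible I p, ?_⟩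
  have hr : ratioSeq Set.univ (fun n => Set.Icc p (p + ((n : ℝ) + 1)⁻¹ / 2))
      = fun _ => (1:ℝ) := by
    funext n
    have hpos : (0:ℝ) < ((n : ℝ) + 1)⁻¹ / 2 := by positivity
    have hvol : volume (Set.Icc p (p + ((n : ℝ) + 1)⁻¹ / 2))
        = ENNReal.ofReal (((n : ℝ) + 1)⁻¹ / 2) := by
      rw [Real.volume_Icc]; ring_nf
    simp only [ratioSeq, Set.univ_inter, hvol]
    rw [ENNReal.div_self (by simp [ENNReal.ofReal_pos.2 hpos, ne_of_gt])
      ENNReal.ofReal_ne_top]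
    simp
  rw [hr, Filter.limsup_const]

lemma upperIDensity_congr_null (I : AdmissibleIdeal) (p : ℝ) {C B : Set ℝ}
    (hC : volume C = 0) : upperIDensity I p (C ∪ B) = upperIDensity I p B := by
  have hr : ∀ J : ℕ → Set ℝ, ratioSeq (C ∪ B) J = ratioSeq B J := by
    intro J; funext n
    have : volume ((C ∪ B) ∩ J n) = volume (B ∩ J n) := by
      apply le_antisymm
      · calc volume ((C ∪ B) ∩ J n) ≤ volume (C ∪ (B ∩ J n)) := by
              apply measure_mono; rw [Set.union_inter_distrib_right]
              exact Set.union_subset_union_left _ Set.inter_subset_left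
        _ ≤ volume C + volume (B ∩ J n) := measure_union_le _ _
        _ = volume (B ∩ J n) := by rw [hC, zero_add]
      · exact measure_mono (Set.inter_subset_inter_left _ Set.subset_union_right)
    simp [ratioSeq, this]
  unfold upperIDensity
  congr 1
  ext l
  simp only [Set.mem_setOf_eq]
  constructor
  · rintro ⟨J, hJ, rfl⟩; exact ⟨J, hJ, by rw [hr J]⟩
  · rintro ⟨J, hJ, rfl⟩; exact ⟨J, hJ, by rw [hr J]⟩


/-- The I-sparse set topology is not first countable: no point has a countable
neighborhood basis. -/
theorem sparseTop_not_first_countable (I : AdmissibleIdeal) (b : ℝ)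
    (U : ℕ → Set ℝ) (hU : ∀ n, U n ∈ sparseTop I ∧ b ∈ U n) :
    ∃ V ∈ sparseTop I, b ∈ V ∧ ∀ n, ¬ U n ⊆ V := by
  -- Step 1: each `U n` contains a point different from `b`.
  have hpt : ∀ n, ∃ y ∈ U n, y ≠ b := by
    intro n
    by_contra h
    push_neg at h
    have hUb : U n = {b} := Set.eq_singleton_iff_unique_mem.2 ⟨(hU n).2, h⟩
    have hsp : ISparseAt I (U n)ᶜ b := (hU n).1 b (hU n).2
    have hcov : IsMeasurableCover Set.univ (U n)ᶜ := by
      refine ⟨MeasurableSet.univ, Set.subset_univ _, fun F hF hFsub => ?_⟩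
      have : F ⊆ ({b} : Set ℝ) := by
        intro y hy
        have := hFsub hy
        rw [Set.diff_compl, Set.univ_inter, hUb] at this
        exact this
      exact measure_mono_null this (by simp)
    have := hsp ∅ MeasurableSet.empty
      (by rw [upperIDensity_empty]; norm_num) Set.univ hcov
    rw [Set.union_empty] at this
    exact absurd (upperIDensity_univ_ge I b) (not_le.2 this)
  choose x hxU hxb using hpt
  refine ⟨(Set.range x)ᶜ, ?_, ?_, ?_⟩
  · -- open in the sparse topology
    intro y _
    rw [compl_compl]
    intro B hB hBlt C hC
    have hD : volume (Set.range x) = 0 :=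
      (Set.countable_range x).measure_zero _
    have hCD : volume (C \ Set.range x) = 0 :=
      hC.2.2 _ (hC.1.diff (Set.countable_range x).measurableSet) Set.Subset.rfl
    have hC0 : volume C = 0 := by
      have : volume C ≤ volume (C \ Set.range x) + volume (Set.range x) := by
        calc volume C ≤ volume ((C \ Set.range x) ∪ Set.range x) :=
              measure_mono (Set.subset_diff_union _ _)
          _ ≤ _ := measure_union_le _ _
      simpa [hCD, hD] using le_antisymm (by simpa [hCD, hD] using this) zero_le
    rw [upperIDensity_congr_null I y hC0]
    exact hBlt
  · simp only [Set.mem_compl_iff, Set.mem_range, not_exists]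
    exact fun n => hxb n
  · intro n hsub
    exact (hsub (hxU n)) (Set.mem_range_self n)
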